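/- Symmetric Green's functions on finite quotients have the inversion symmetry G(x,y) = G(p^{m−1} x^{−1}, p^{m−1} y^{−1}): if k ≥ 1 and G is a symmetric Green's function on E_k, then for all x, y ∈ E one has p^{m−1} x^{−1} ∈ E, p^{m−1} y^{−1} ∈ E, and G(p^{m−1} x^{−1}, p^{m−1} y^{−1}) = G(x, y). -/

import Mathlib

open MeasureTheory
open scoped ENNReal

noncomputable section

/-- The fundamental domain `E = ⋃_{s=0}^{m-1} p^s ℤ_p^×` of the Tate curve
`ℚ_p^×/p^{mℤ}`, described as the set of `x` with `p^{-(m-1)} ≤ |x| ≤ 1`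
(such an `x` is automatically nonzero). -/
def Efund (p m : ℕ) [Fact p.Prime] : Set ℚ_[p] :=
  {x | (p : ℝ) ^ (1 - (m : ℤ)) ≤ ‖x‖ ∧ ‖x‖ ≤ 1}

/-- The operator `(Dφ)(x) = |x| ∫_E (φ(z) − φ(x))/|z − x|² dμ⁺(z)`. -/
def Dop (p m : ℕ) [Fact p.Prime] [MeasurableSpace ℚ_[p]]
    (μ : Measure ℚ_[p]) (φ : ℚ_[p] → ℝ) (x : ℚ_[p]) : ℝ :=
  ‖x‖ * ∫ z in Efund p m, (φ z - φ x) / ‖z - x‖ ^ 2 ∂μ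

/-- The multiplicative measure `dμ× = dμ⁺/|x|`. -/
def mulMeasure (p : ℕ) [Fact p.Prime] [MeasurableSpace ℚ_[p]]
    (μ : Measure ℚ_[p]) : Measure ℚ_[p] :=
  μ.withDensity fun x => ENNReal.ofReal (1 / ‖x‖)

/-- `f` is locally constant on `E`: every point of `E` has a neighborhood in `E`
on which `f` is constant. -/
def LocConstOn (p m : ℕ) [Fact p.Prime] (f : ℚ_[p] → ℝ) : Prop :=
  ∀ x ∈ Efund p m, ∃ n : ℕ,
    ∀ y ∈ Efund p m, ‖y - x‖ ≤ (p : ℝ) ^ (-(n : ℤ)) → f y = f x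

/-- `f : E → ℝ` has conductor `k`: `f(xu) = f(x)` for all `x ∈ E` and all
`u ∈ 1 + p^k ℤ_p` (note `xu ∈ E`). -/
def HasConductor (p m : ℕ) [Fact p.Prime] (k : ℕ) (f : ℚ_[p] → ℝ) : Prop :=
  ∀ x ∈ Efund p m, ∀ u : ℚ_[p], ‖u - 1‖ ≤ (p : ℝ) ^ (-(k : ℤ)) → f (x * u) = f x

/-- A Green's function on the finite quotient `E_k`: a function `G : E × E → ℝ` of
conductor `k` in each variable such that for all `x, y ∈ E`,
`(D G(·,y))(x) = p^k · 𝟙[x/y ∈ 1 + p^k ℤ_p] − 1/V` where `V = m (1 − 1/p)`. -/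
def IsGreen (p m : ℕ) [Fact p.Prime] [MeasurableSpace ℚ_[p]]
    (μ : Measure ℚ_[p]) (k : ℕ) (G : ℚ_[p] → ℚ_[p] → ℝ) : Prop :=
  (∀ y ∈ Efund p m, HasConductor p m k (fun x => G x y)) ∧
  (∀ x ∈ Efund p m, HasConductor p m k (fun y => G x y)) ∧
  ∀ x ∈ Efund p m, ∀ y ∈ Efund p m,
    Dop p m μ (fun z => G z y) x =
      (if ‖x / y - 1‖ ≤ (p : ℝ) ^ (-(k : ℤ)) then (p : ℝ) ^ k else 0)
        - 1 / ((m : ℝ) * (1 - 1 / (p : ℝ)))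

/-- `G` is symmetric on `E × E`. -/
def IsSymmG (p m : ℕ) [Fact p.Prime] (G : ℚ_[p] → ℚ_[p] → ℝ) : Prop :=
  ∀ x ∈ Efund p m, ∀ y ∈ Efund p m, G x y = G y x

namespace GreenAux

open Metric

variable {p : ℕ} [hp : Fact p.Prime] {m k : ℕ}

noncomputable local instance : DecidableEq ℚ_[p] := Classical.decEq _
noncomputable local instance : DecidableEq (Set ℚ_[p]) := Classical.decEq _

lemma one_lt_pR : (1:ℝ) < p := by exact_mod_cast hp.out.one_lt
lemma pR_pos : (0:ℝ) < p := lt_trans one_pos one_lt_pR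
lemma ppow_pos (t : ℤ) : (0:ℝ) < (p:ℝ)^t := zpow_pos pR_pos t
lemma ppow_le_one {t : ℤ} (ht : t ≤ 0) : (p:ℝ)^t ≤ 1 := by
  calc (p:ℝ)^t ≤ (p:ℝ)^(0:ℤ) := zpow_le_zpow_right₀ one_lt_pR.le ht
  _ = 1 := by norm_num
lemma ppow_lt_one {t : ℤ} (ht : t < 0) : (p:ℝ)^t < 1 := by
  calc (p:ℝ)^t < (p:ℝ)^(0:ℤ) := by
        exact zpow_lt_zpow_right₀ one_lt_pR ht
  _ = 1 := by norm_num

lemma pQ_ne_zero : (p:ℚ_[p]) ≠ 0 := by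
  exact_mod_cast Nat.cast_ne_zero.mpr hp.out.ne_zero

lemma norm_p_pow_nat (s : ℕ) : ‖(p:ℚ_[p])^s‖ = (p:ℝ)^(-(s:ℤ)) := Padic.norm_p_pow s

/-- ultrametric triangle inequality for subtraction -/
lemma ultra_sub (x y z : ℚ_[p]) : ‖x - y‖ ≤ max ‖x - z‖ ‖z - y‖ := by
  simpa using Padic.nonarchimedean (x - z) (z - y)

lemma norm_eq_of_close {a b : ℚ_[p]} (h : ‖a - b‖ < ‖a‖) : ‖b‖ = ‖a‖ := by
  have hne : ‖a‖ ≠ ‖b - a‖ := by rw [norm_sub_rev] at h; exact (ne_of_gt h)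
  have : ‖a + (b - a)‖ = max ‖a‖ ‖b - a‖ := Padic.add_eq_max_of_ne hne
  simp only [add_sub_cancel] at this
  rw [this, max_eq_left]
  rw [norm_sub_rev] at h; exact h.le

lemma Efund_ne_zero {x : ℚ_[p]} (hx : x ∈ Efund p m) : x ≠ 0 := by
  rintro rfl
  have h := hx.1
  rw [norm_zero] at h
  exact absurd h (not_le.mpr (ppow_pos _))

lemma Efund_norm_pos {x : ℚ_[p]} (hx : x ∈ Efund p m) : 0 < ‖x‖ :=
  norm_pos_iff.mpr (Efund_ne_zero hx)

lemma Efund_exists_s {x : ℚ_[p]} (hx : x ∈ Efund p m) :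
    ∃ s : ℕ, s < m ∧ ‖x‖ = (p:ℝ)^(-(s:ℤ)) := by
  have hx0 := Efund_ne_zero hx
  have hnorm : ‖x‖ = (p:ℝ)^(-x.valuation) := Padic.norm_eq_zpow_neg_valuation hx0
  have h1 : (p:ℝ)^(1-(m:ℤ)) ≤ (p:ℝ)^(-x.valuation) := hnorm ▸ hx.1
  have h2 : (p:ℝ)^(-x.valuation) ≤ (p:ℝ)^(0:ℤ) := by
    rw [zpow_zero]; exact hnorm ▸ hx.2
  rw [zpow_le_zpow_iff_right₀ one_lt_pR] at h1 h2
  refine ⟨x.valuation.toNat, by omega, ?_⟩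
  rw [hnorm]; congr 1; omega

lemma mem_Efund_of_norm {x : ℚ_[p]} {s : ℕ} (hs : s < m) (h : ‖x‖ = (p:ℝ)^(-(s:ℤ))) :
    x ∈ Efund p m := by
  constructor
  · rw [h]; exact zpow_le_zpow_right₀ one_lt_pR.le (by omega)
  · rw [h]; exact ppow_le_one (by omega)

/-! ### the inversion map -/

variable (p m) in
def sig (x : ℚ_[p]) : ℚ_[p] := (p:ℚ_[p])^(m-1) * x⁻¹

lemma sig_sig {x : ℚ_[p]} (hx : x ≠ 0) : sig p m (sig p m x) = x := by
  unfold sig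
  have h : (p:ℚ_[p])^(m-1) ≠ 0 := pow_ne_zero _ pQ_ne_zero
  field_simp

lemma sig_ne_zero {x : ℚ_[p]} (hx : x ≠ 0) : sig p m x ≠ 0 := by
  unfold sig
  exact mul_ne_zero (pow_ne_zero _ pQ_ne_zero) (inv_ne_zero hx)

lemma norm_sig (hm : 1 ≤ m) {x : ℚ_[p]} (hx : x ≠ 0) :
    ‖sig p m x‖ = (p:ℝ)^(1-(m:ℤ)) / ‖x‖ := by
  unfold sig
  rw [norm_mul, norm_inv, norm_p_pow_nat, div_eq_mul_inv]
  congr 2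
  push_cast [Nat.cast_sub hm]
  ring

lemma sig_mem_Efund (hm : 1 ≤ m) {x : ℚ_[p]} (hx : x ∈ Efund p m) :
    sig p m x ∈ Efund p m := by
  have hx0 := Efund_ne_zero hx
  have ha : 0 < ‖x‖ := Efund_norm_pos hx
  have h1 := hx.1
  have h2 := hx.2
  have hP : (0:ℝ) < (p:ℝ)^(1-(m:ℤ)) := ppow_pos _
  constructor
  · rw [norm_sig hm hx0, le_div_iff₀ ha]
    nlinarith
  · rw [norm_sig hm hx0, div_le_one ha]
    exact h1

lemma norm_sig_sub_sig (hm : 1 ≤ m) {a b : ℚ_[p]} (ha : a ≠ 0) (hb : b ≠ 0) :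
    ‖sig p m a - sig p m b‖ = (p:ℝ)^(1-(m:ℤ)) * ‖a - b‖ / (‖a‖ * ‖b‖) := by
  have key : sig p m a - sig p m b = (p:ℚ_[p])^(m-1) * (b - a) * (a⁻¹ * b⁻¹) := by
    unfold sig; field_simp
  rw [key, norm_mul, norm_mul, norm_mul, norm_inv, norm_inv, norm_p_pow_nat, norm_sub_rev]
  have hc : (-((m-1:ℕ):ℤ)) = 1 - (m:ℤ) := by push_cast [Nat.cast_sub hm]; ring
  rw [hc]
  field_simp

/-! ### balls -/

variable (p) in
def bal (K : ℕ) (c : ℚ_[p]) : Set ℚ_[p] := Metric.closedBall c ((p:ℝ)^(-(K:ℤ)) * ‖c‖)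

lemma mem_bal {K : ℕ} {c z : ℚ_[p]} : z ∈ bal p K c ↔ ‖z - c‖ ≤ (p:ℝ)^(-(K:ℤ)) * ‖c‖ := by
  simp [bal, Metric.mem_closedBall, dist_eq_norm]

lemma self_mem_bal {K : ℕ} (c : ℚ_[p]) : c ∈ bal p K c := by
  rw [mem_bal, sub_self, norm_zero]
  positivity

lemma measurableSet_bal [MeasurableSpace ℚ_[p]] [BorelSpace ℚ_[p]] {K : ℕ} (c : ℚ_[p]) :
    MeasurableSet (bal p K c) := measurableSet_closedBall

lemma norm_of_mem_bal {K : ℕ} (hK : 1 ≤ K) {c z : ℚ_[p]} (hc : c ≠ 0) (hz : z ∈ bal p K c) :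
    ‖z‖ = ‖c‖ := by
  have hcpos : 0 < ‖c‖ := norm_pos_iff.mpr hc
  have h1 : ‖c - z‖ < ‖c‖ := by
    rw [norm_sub_rev]
    refine lt_of_le_of_lt (mem_bal.mp hz) ?_
    have : (p:ℝ)^(-(K:ℤ)) < 1 := ppow_lt_one (by omega)
    nlinarith
  exact norm_eq_of_close h1

lemma bal_eq_bal {K : ℕ} {c c' : ℚ_[p]}
    (hnorm : ‖c'‖ = ‖c‖) (hcc' : ‖c' - c‖ ≤ (p:ℝ)^(-(K:ℤ)) * ‖c‖) :
    bal p K c' = bal p K c := by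
  ext z
  rw [mem_bal, mem_bal, hnorm]
  constructor
  · intro h
    refine le_trans (ultra_sub z c c') (max_le h hcc')
  · intro h
    refine le_trans (ultra_sub z c' c) (max_le h ?_)
    rw [norm_sub_rev]; exact hcc'

lemma sig_mem_bal (hm : 1 ≤ m) {K : ℕ} (hK : 1 ≤ K) {c z : ℚ_[p]} (hc : c ≠ 0)
    (hz : z ∈ bal p K c) : sig p m z ∈ bal p K (sig p m c) := by
  have hz0 : z ≠ 0 := by
    intro h
    have := norm_of_mem_bal hK hc hz
    rw [h, norm_zero] at this
    exact hc (norm_eq_zero.mp this.symm)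
  have hzn : ‖z‖ = ‖c‖ := norm_of_mem_bal hK hc hz
  have hcpos : 0 < ‖c‖ := norm_pos_iff.mpr hc
  rw [mem_bal, norm_sig_sub_sig hm hz0 hc, norm_sig hm hc, hzn]
  rw [div_le_iff₀ (by positivity)]
  have h := mem_bal.mp hz
  have hP : (0:ℝ) < (p:ℝ)^(1-(m:ℤ)) := ppow_pos _
  have hKpos : (0:ℝ) < (p:ℝ)^(-(K:ℤ)) := ppow_pos _
  calc (p:ℝ)^(1-(m:ℤ)) * ‖z - c‖ ≤ (p:ℝ)^(1-(m:ℤ)) * ((p:ℝ)^(-(K:ℤ)) * ‖c‖) := by nlinarith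
  _ = (p:ℝ)^(-(K:ℤ)) * ((p:ℝ)^(1-(m:ℤ)) / ‖c‖) * (‖c‖ * ‖c‖) := by
        have hcne : ‖c‖ ≠ 0 := ne_of_gt hcpos
        set A := (p:ℝ)^(1-(m:ℤ))
        set B := (p:ℝ)^(-(K:ℤ))
        field_simp

lemma sig_image_bal (hm : 1 ≤ m) {K : ℕ} (hK : 1 ≤ K) {c : ℚ_[p]} (hc : c ≠ 0) :
    sig p m '' (bal p K c) = bal p K (sig p m c) := by
  apply Set.Subset.antisymm
  · rintro _ ⟨z, hz, rfl⟩
    exact sig_mem_bal hm hK hc hz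
  · intro w hw
    have hsc : sig p m c ≠ 0 := sig_ne_zero hc
    have hw0 : w ≠ 0 := by
      intro h
      have := norm_of_mem_bal hK hsc hw
      rw [h, norm_zero] at this
      exact hsc (norm_eq_zero.mp this.symm)
    refine ⟨sig p m w, ?_, sig_sig hw0⟩
    have := sig_mem_bal hm hK hsc hw
    rwa [sig_sig hc] at this

/-! ### representatives and cells -/

def reps (p m K : ℕ) [Fact p.Prime] : Finset ℚ_[p] :=
  ((Finset.range m) ×ˢ ((Finset.range (p^K)).filter fun j => ¬ p ∣ (j+1))).image
    fun i => (p:ℚ_[p])^i.1 * ((i.2:ℚ_[p]) + 1)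

def cells (p m K : ℕ) [Fact p.Prime] : Finset (Set ℚ_[p]) := (reps p m K).image (bal p K)

lemma norm_natCast_unit {j : ℕ} (hj : ¬ p ∣ j) : ‖(j:ℚ_[p])‖ = 1 := by
  have h1 : ‖((j:ℤ):ℚ_[p])‖ ≤ 1 := Padic.norm_int_le_one _
  have h2 : ¬ (‖((j:ℤ):ℚ_[p])‖ < 1) := by
    rw [Padic.norm_intCast_lt_one_iff]
    exact_mod_cast hj
  push_cast at h1 h2
  linarith [not_lt.mp h2]

lemma norm_of_mem_reps {K : ℕ} {c : ℚ_[p]} (hc : c ∈ reps p m K) :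
    ∃ s : ℕ, s < m ∧ ‖c‖ = (p:ℝ)^(-(s:ℤ)) := by
  simp only [reps, Finset.mem_image, Finset.mem_product, Finset.mem_filter,
    Finset.mem_range] at hc
  obtain ⟨⟨s, j⟩, ⟨hs, _, hj⟩, rfl⟩ := hc
  refine ⟨s, hs, ?_⟩
  rw [norm_mul, norm_p_pow_nat]
  have hcast : ((j:ℚ_[p]) + 1) = (((j+1 : ℕ)):ℚ_[p]) := by push_cast; ring
  rw [hcast, norm_natCast_unit hj, mul_one]

lemma mem_Efund_of_mem_reps {K : ℕ} {c : ℚ_[p]} (hc : c ∈ reps p m K) :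
    c ∈ Efund p m := by
  obtain ⟨s, hs, hn⟩ := norm_of_mem_reps hc
  exact mem_Efund_of_norm hs hn

lemma exists_rep (hm : 1 ≤ m) {K : ℕ} (hK : 1 ≤ K) {x : ℚ_[p]} (hx : x ∈ Efund p m) :
    ∃ c ∈ reps p m K, x ∈ bal p K c ∧ bal p K x = bal p K c := by
  obtain ⟨s, hs, hxs⟩ := Efund_exists_s hx
  have hx0 := Efund_ne_zero hx
  have hps : (p:ℚ_[p])^s ≠ 0 := pow_ne_zero _ pQ_ne_zero
  set u : ℚ_[p] := x * ((p:ℚ_[p])^s)⁻¹ with hu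
  have hun : ‖u‖ = 1 := by
    rw [hu, norm_mul, norm_inv, norm_p_pow_nat, hxs]
    exact mul_inv_cancel₀ (ne_of_gt (ppow_pos _))
  have hxu : x = (p:ℚ_[p])^s * u := by rw [hu]; field_simp
  set U : ℤ_[p] := ⟨u, le_of_eq hun⟩ with hU
  set j0 : ℕ := U.appr K with hj0
  have hspec : U - (j0:ℤ_[p]) ∈ Ideal.span {(p:ℤ_[p])^K} := PadicInt.appr_spec K U
  have hnormZ : ‖U - (j0:ℤ_[p])‖ ≤ (p:ℝ)^(-(K:ℤ)) :=
    (PadicInt.norm_le_pow_iff_mem_span_pow _ K).mpr hspec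
  have hnormQ : ‖u - (j0:ℚ_[p])‖ ≤ (p:ℝ)^(-(K:ℤ)) := by
    have hcoe : ((U - (j0:ℤ_[p]) : ℤ_[p]) : ℚ_[p]) = u - (j0:ℚ_[p]) := by
      push_cast [hU]
      rfl
    rw [← hcoe]
    exact hnormZ
  have hlt1 : ‖u - (j0:ℚ_[p])‖ < ‖u‖ := by
    rw [hun]
    exact lt_of_le_of_lt hnormQ (ppow_lt_one (by omega))
  have hj0n : ‖(j0:ℚ_[p])‖ = 1 := by rw [norm_eq_of_close hlt1, hun]
  have hj0nd : ¬ p ∣ j0 := by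
    intro hdvd
    have : ‖((j0:ℤ):ℚ_[p])‖ < 1 := by
      rw [Padic.norm_intCast_lt_one_iff]
      exact_mod_cast hdvd
    push_cast at this
    rw [hj0n] at this
    exact lt_irrefl _ this
  have hj0pos : 1 ≤ j0 := by
    rcases Nat.eq_zero_or_pos j0 with h | h
    · exfalso; rw [h] at hj0n; simp at hj0n
    · exact h
  have hj0lt : j0 < p^K := PadicInt.appr_lt U K
  set c : ℚ_[p] := (p:ℚ_[p])^s * (j0:ℚ_[p]) with hc
  have hcmem : c ∈ reps p m K := by
    simp only [reps, Finset.mem_image, Finset.mem_product, Finset.mem_filter,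
      Finset.mem_range]
    refine ⟨(s, j0 - 1), ⟨hs, by omega, ?_⟩, ?_⟩
    · have : j0 - 1 + 1 = j0 := by omega
      rw [this]; exact hj0nd
    · rw [hc]
      congr 1
      push_cast [Nat.cast_sub hj0pos]
      ring
  have hcn : ‖c‖ = (p:ℝ)^(-(s:ℤ)) := by
    rw [hc, norm_mul, norm_p_pow_nat, hj0n, mul_one]
  have hxc : ‖x - c‖ ≤ (p:ℝ)^(-(K:ℤ)) * ‖c‖ := by
    have : x - c = (p:ℚ_[p])^s * (u - (j0:ℚ_[p])) := by rw [hxu, hc]; ring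
    rw [this, norm_mul, norm_p_pow_nat, hcn, mul_comm]
    have := ppow_pos (p := p) (-(s:ℤ))
    nlinarith [hnormQ]
  have hballs : bal p K x = bal p K c := by
    apply bal_eq_bal (by rw [hxs, hcn]) hxc
  exact ⟨c, hcmem, mem_bal.mpr hxc, hballs⟩

lemma bal_mem_cells (hm : 1 ≤ m) {K : ℕ} (hK : 1 ≤ K) {x : ℚ_[p]} (hx : x ∈ Efund p m) :
    bal p K x ∈ cells p m K := by
  obtain ⟨c, hc, _, hb⟩ := exists_rep hm hK hx
  rw [hb]
  exact Finset.mem_image_of_mem _ hc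

lemma cells_shape {K : ℕ} {B : Set ℚ_[p]} (hB : B ∈ cells p m K) :
    ∃ c, (c ∈ reps p m K ∧ c ∈ Efund p m) ∧ B = bal p K c := by
  obtain ⟨c, hc, rfl⟩ := Finset.mem_image.mp hB
  exact ⟨c, ⟨hc, mem_Efund_of_mem_reps hc⟩, rfl⟩

lemma mem_Efund_of_mem_bal {K : ℕ} (hK : 1 ≤ K) {c z : ℚ_[p]} (hc : c ∈ Efund p m)
    (hz : z ∈ bal p K c) : z ∈ Efund p m := by
  obtain ⟨s, hs, hn⟩ := Efund_exists_s hc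
  have := norm_of_mem_bal hK (Efund_ne_zero hc) hz
  exact mem_Efund_of_norm hs (by rw [this, hn])

lemma Efund_eq_biUnion (hm : 1 ≤ m) {K : ℕ} (hK : 1 ≤ K) :
    Efund p m = ⋃ B ∈ cells p m K, (B : Set ℚ_[p]) := by
  apply Set.Subset.antisymm
  · intro x hx
    obtain ⟨c, hc, hxc, _⟩ := exists_rep hm hK hx
    exact Set.mem_biUnion (Finset.mem_image_of_mem _ hc) hxc
  · intro z hz
    simp only [Set.mem_iUnion] at hz
    obtain ⟨B, hB, hzB⟩ := hz
    obtain ⟨c, ⟨_, hcE⟩, rfl⟩ := cells_shape hB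
    exact mem_Efund_of_mem_bal hK hcE hzB

lemma cells_pairwise_disjoint {K : ℕ} (hK : 1 ≤ K) :
    Set.Pairwise (↑(cells p m K) : Set (Set ℚ_[p])) (Function.onFun Disjoint id) := by
  intro B hB B' hB' hne
  obtain ⟨c, ⟨_, hcE⟩, rfl⟩ := cells_shape (Finset.mem_coe.mp hB)
  obtain ⟨c', ⟨_, hcE'⟩, rfl⟩ := cells_shape (Finset.mem_coe.mp hB')
  rw [Function.onFun, id, id]
  by_contra hnd
  obtain ⟨z, hz, hz'⟩ := Set.not_disjoint_iff.mp hnd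
  have h1 : ‖z‖ = ‖c‖ := norm_of_mem_bal hK (Efund_ne_zero hcE) hz
  have h2 : ‖z‖ = ‖c'‖ := norm_of_mem_bal hK (Efund_ne_zero hcE') hz'
  have hnn : ‖c'‖ = ‖c‖ := by rw [← h2, h1]
  apply hne
  apply (bal_eq_bal hnn ?_).symm
  refine le_trans (ultra_sub c' c z) (max_le ?_ ?_)
  · rw [norm_sub_rev, ← hnn]
    exact mem_bal.mp hz'
  · exact mem_bal.mp hz

/-! ### measures of balls -/

section Measure

variable [MeasurableSpace ℚ_[p]] [BorelSpace ℚ_[p]] {μ : Measure ℚ_[p]}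
  [μ.IsAddHaarMeasure]

lemma meas_translate (c : ℚ_[p]) (r : ℝ) :
    μ (Metric.closedBall c r) = μ (Metric.closedBall 0 r) := by
  have h := measure_preimage_add μ c (Metric.closedBall c r)
  rw [← h]
  congr 1
  ext z
  simp [Metric.mem_closedBall, dist_eq_norm]

lemma closedBall_zero_eq_biUnion (n : ℕ) :
    Metric.closedBall (0:ℚ_[p]) ((p:ℝ)^(-(n:ℤ))) =
      ⋃ j ∈ Finset.range p,
        Metric.closedBall ((j:ℚ_[p]) * (p:ℚ_[p])^n) ((p:ℝ)^(-((n:ℤ)+1))) := by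
  apply Set.Subset.antisymm
  · intro x hx
    rw [Metric.mem_closedBall, dist_zero_right] at hx
    have hps : (p:ℚ_[p])^n ≠ 0 := pow_ne_zero _ pQ_ne_zero
    set u : ℚ_[p] := x * ((p:ℚ_[p])^n)⁻¹ with hu
    have hun : ‖u‖ ≤ 1 := by
      rw [hu, norm_mul, norm_inv, norm_p_pow_nat]
      calc ‖x‖ * ((p:ℝ)^(-(n:ℤ)))⁻¹ ≤ (p:ℝ)^(-(n:ℤ)) * ((p:ℝ)^(-(n:ℤ)))⁻¹ := by
            have := ppow_pos (p := p) (-(n:ℤ))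
            have h2 : 0 < ((p:ℝ)^(-(n:ℤ)))⁻¹ := by positivity
            nlinarith
      _ = 1 := mul_inv_cancel₀ (ne_of_gt (ppow_pos _))
    have hxu : x = (p:ℚ_[p])^n * u := by rw [hu]; field_simp
    set U : ℤ_[p] := ⟨u, hun⟩ with hU
    set j0 : ℕ := U.appr 1 with hj0
    have hspec : U - (j0:ℤ_[p]) ∈ Ideal.span {(p:ℤ_[p])^1} := PadicInt.appr_spec 1 U
    have hnormZ : ‖U - (j0:ℤ_[p])‖ ≤ (p:ℝ)^(-(1:ℕ):ℤ) :=
      (PadicInt.norm_le_pow_iff_mem_span_pow _ 1).mpr hspec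
    have hnormQ : ‖u - (j0:ℚ_[p])‖ ≤ (p:ℝ)^(-(1:ℤ)) := by
      have hcoe : ((U - (j0:ℤ_[p]) : ℤ_[p]) : ℚ_[p]) = u - (j0:ℚ_[p]) := by
        push_cast [hU]
        rfl
      rw [← hcoe]
      exact_mod_cast hnormZ
    have hj0lt : j0 < p := by
      have := PadicInt.appr_lt U 1
      simpa using this
    refine Set.mem_biUnion (Finset.mem_range.mpr hj0lt) ?_
    rw [Metric.mem_closedBall, dist_eq_norm]
    have hdiff : x - (j0:ℚ_[p]) * (p:ℚ_[p])^n = (p:ℚ_[p])^n * (u - (j0:ℚ_[p])) := by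
      rw [hxu]; ring
    rw [hdiff, norm_mul, norm_p_pow_nat]
    calc (p:ℝ)^(-(n:ℤ)) * ‖u - (j0:ℚ_[p])‖ ≤ (p:ℝ)^(-(n:ℤ)) * (p:ℝ)^(-(1:ℤ)) := by
          have := ppow_pos (p := p) (-(n:ℤ))
          nlinarith
    _ = (p:ℝ)^(-((n:ℤ)+1)) := by
          rw [← zpow_add₀ (ne_of_gt (pR_pos (p := p)))]
          ring_nf
  · intro z hz
    simp only [Set.mem_iUnion, Finset.mem_range, exists_prop] at hz
    obtain ⟨j, hj, hzj⟩ := hz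
    rw [Metric.mem_closedBall, dist_eq_norm] at hzj
    rw [Metric.mem_closedBall, dist_zero_right]
    have h1 : ‖(j:ℚ_[p]) * (p:ℚ_[p])^n‖ ≤ (p:ℝ)^(-(n:ℤ)) := by
      rw [norm_mul, norm_p_pow_nat]
      have hj1 : ‖((j:ℤ):ℚ_[p])‖ ≤ 1 := Padic.norm_int_le_one _
      push_cast at hj1
      have := ppow_pos (p := p) (-(n:ℤ))
      nlinarith
    have h2 : ‖z‖ ≤ max ‖z - (j:ℚ_[p]) * (p:ℚ_[p])^n‖ ‖(j:ℚ_[p]) * (p:ℚ_[p])^n‖ := by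
      have := Padic.nonarchimedean (z - (j:ℚ_[p]) * (p:ℚ_[p])^n) ((j:ℚ_[p]) * (p:ℚ_[p])^n)
      simpa using this
    refine le_trans h2 (max_le (le_trans hzj ?_) h1)
    apply zpow_le_zpow_right₀ one_lt_pR.le
    omega

lemma pairwise_disjoint_decomp (n : ℕ) :
    Set.Pairwise (↑(Finset.range p) : Set ℕ)
      (Function.onFun Disjoint fun j =>
        Metric.closedBall ((j:ℚ_[p]) * (p:ℚ_[p])^n) ((p:ℝ)^(-((n:ℤ)+1)))) := by
  intro j hj j' hj' hne
  rw [Function.onFun]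
  simp only [Finset.coe_range, Set.mem_Iio] at hj hj'
  by_contra hnd
  obtain ⟨z, hz, hz'⟩ := Set.not_disjoint_iff.mp hnd
  rw [Metric.mem_closedBall, dist_eq_norm] at hz hz'
  have hd : ‖(j:ℚ_[p]) * (p:ℚ_[p])^n - (j':ℚ_[p]) * (p:ℚ_[p])^n‖ ≤ (p:ℝ)^(-((n:ℤ)+1)) := by
    refine le_trans (ultra_sub _ _ z) (max_le ?_ hz')
    rw [norm_sub_rev]
    exact hz
  have heq : (j:ℚ_[p]) * (p:ℚ_[p])^n - (j':ℚ_[p]) * (p:ℚ_[p])^n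
      = (((j:ℤ) - (j':ℤ) : ℤ) : ℚ_[p]) * (p:ℚ_[p])^n := by push_cast; ring
  have hnd2 : ¬ ((p:ℤ) ∣ ((j:ℤ) - (j':ℤ))) := by
    intro hdvd
    have hne0 : ((j:ℤ) - (j':ℤ)) ≠ 0 := by
      intro h
      exact hne (by exact_mod_cast sub_eq_zero.mp h)
    have hle := Int.le_of_dvd (abs_pos.mpr hne0) ((dvd_abs _ _).mpr hdvd)
    have habs : |(j:ℤ) - (j':ℤ)| < p := by
      rw [abs_lt]
      constructor <;> omega
    linarith
  have hn1 : ‖(((j:ℤ) - (j':ℤ) : ℤ) : ℚ_[p])‖ = 1 := by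
    have hle : ‖(((j:ℤ) - (j':ℤ) : ℤ) : ℚ_[p])‖ ≤ 1 := Padic.norm_int_le_one _
    have hlt : ¬ (‖(((j:ℤ) - (j':ℤ) : ℤ) : ℚ_[p])‖ < 1) := by
      rw [Padic.norm_intCast_lt_one_iff]
      exact hnd2
    linarith [not_lt.mp hlt]
  rw [heq, norm_mul, hn1, one_mul, norm_p_pow_nat] at hd
  have : ((-(n:ℤ)) ≤ (-((n:ℤ)+1))) := by
    rwa [← zpow_le_zpow_iff_right₀ (one_lt_pR (p := p))]
  omega

lemma meas_closedBall_zero (hμ : μ (Metric.closedBall (0:ℚ_[p]) 1) = 1) (n : ℕ) :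
    μ (Metric.closedBall (0:ℚ_[p]) ((p:ℝ)^(-(n:ℤ)))) = ENNReal.ofReal ((p:ℝ)^(-(n:ℤ))) := by
  induction n with
  | zero => simpa using hμ
  | succ n ih =>
    have hdec := closedBall_zero_eq_biUnion (p := p) n
    have hmeas : μ (Metric.closedBall (0:ℚ_[p]) ((p:ℝ)^(-(n:ℤ))))
        = ∑ j ∈ Finset.range p, μ (Metric.closedBall ((j:ℚ_[p]) * (p:ℚ_[p])^n)
            ((p:ℝ)^(-((n:ℤ)+1)))) := by
      rw [hdec]
      exact measure_biUnion_finset (pairwise_disjoint_decomp n)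
        (fun j _ => measurableSet_closedBall)
    have hsum : ∑ j ∈ Finset.range p, μ (Metric.closedBall ((j:ℚ_[p]) * (p:ℚ_[p])^n)
        ((p:ℝ)^(-((n:ℤ)+1))))
        = (p : ℝ≥0∞) * μ (Metric.closedBall (0:ℚ_[p]) ((p:ℝ)^(-((n:ℤ)+1)))) := by
      rw [Finset.sum_congr rfl (fun j _ => meas_translate _ _)]
      rw [Finset.sum_const, Finset.card_range, nsmul_eq_mul]
    have hkey : (p : ℝ≥0∞) * μ (Metric.closedBall (0:ℚ_[p]) ((p:ℝ)^(-((n:ℤ)+1))))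
        = ENNReal.ofReal ((p:ℝ)^(-(n:ℤ))) := by
      rw [← hsum, ← hmeas, ih]
    have hfin : μ (Metric.closedBall (0:ℚ_[p]) ((p:ℝ)^(-((n:ℤ)+1)))) ≠ ⊤ := by
      have hsub : Metric.closedBall (0:ℚ_[p]) ((p:ℝ)^(-((n:ℤ)+1)))
          ⊆ Metric.closedBall (0:ℚ_[p]) 1 := by
        apply Metric.closedBall_subset_closedBall
        have : ((p:ℝ)^(-((n:ℤ)+1))) ≤ (p:ℝ)^(0:ℤ) :=
          zpow_le_zpow_right₀ one_lt_pR.le (by omega)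
        simpa using this
      have := measure_mono (μ := μ) hsub
      rw [hμ] at this
      exact ne_top_of_le_ne_top (by simp) this
    have hexp : (-((n:ℤ)+1)) = (-((n+1:ℕ):ℤ)) := by push_cast; ring
    have htr : ((p:ℝ≥0∞) * μ (Metric.closedBall (0:ℚ_[p]) ((p:ℝ)^(-((n:ℤ)+1))))).toReal
        = (p:ℝ) * (μ (Metric.closedBall (0:ℚ_[p]) ((p:ℝ)^(-((n:ℤ)+1))))).toReal := by
      rw [ENNReal.toReal_mul]
      simp
    have hval : (μ (Metric.closedBall (0:ℚ_[p]) ((p:ℝ)^(-((n:ℤ)+1))))).toReal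
        = (p:ℝ)^(-((n:ℤ)+1)) := by
      have hp0 : (p:ℝ) ≠ 0 := ne_of_gt pR_pos
      have h1 : (p:ℝ) * (μ (Metric.closedBall (0:ℚ_[p]) ((p:ℝ)^(-((n:ℤ)+1))))).toReal
          = (p:ℝ)^(-(n:ℤ)) := by
        rw [← htr, hkey, ENNReal.toReal_ofReal (le_of_lt (ppow_pos _))]
      have h2 : (p:ℝ)^(-(n:ℤ)) = (p:ℝ) * (p:ℝ)^(-((n:ℤ)+1)) := by
        have h3 := zpow_add₀ hp0 (1:ℤ) (-((n:ℤ)+1))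
        simp only [zpow_one] at h3
        rw [← h3]
        congr 1
        ring
      apply mul_left_cancel₀ hp0
      rw [h1, h2]
    rw [hexp] at hval hfin
    rw [← ENNReal.ofReal_toReal hfin, hval]

lemma meas_bal (hμ : μ (Metric.closedBall (0:ℚ_[p]) 1) = 1) {c : ℚ_[p]} {s : ℕ}
    (hcn : ‖c‖ = (p:ℝ)^(-(s:ℤ))) (K : ℕ) :
    μ (bal p K c) = ENNReal.ofReal ((p:ℝ)^(-(K:ℤ)) * ‖c‖) := by
  unfold bal
  rw [hcn, meas_translate]
  have hexp : (p:ℝ)^(-(K:ℤ)) * (p:ℝ)^(-(s:ℤ)) = (p:ℝ)^(-((K+s:ℕ):ℤ)) := by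
    rw [← zpow_add₀ (ne_of_gt (pR_pos (p := p)))]
    congr 1
    push_cast
    ring
  rw [hexp, meas_closedBall_zero hμ (K+s)]

end Measure

/-! ### cell-constant functions and integration -/

def CellC (p m K : ℕ) [Fact p.Prime] (f : ℚ_[p] → ℝ) : Prop :=
  ∀ c ∈ Efund p m, ∀ z ∈ bal p K c, f z = f c

section Integration

variable [MeasurableSpace ℚ_[p]] [BorelSpace ℚ_[p]] {μ : Measure ℚ_[p]}
  [μ.IsAddHaarMeasure]

lemma CellC.integral_bal (hμ : μ (Metric.closedBall (0:ℚ_[p]) 1) = 1) {K : ℕ}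
    {f : ℚ_[p] → ℝ} (hf : CellC p m K f) {c : ℚ_[p]} (hc : c ∈ Efund p m) :
    ∫ z in bal p K c, f z ∂μ = ((p:ℝ)^(-(K:ℤ)) * ‖c‖) * f c := by
  obtain ⟨s, hs, hcn⟩ := Efund_exists_s hc
  rw [setIntegral_congr_fun (measurableSet_bal c) (fun z hz => hf c hc z hz)]
  rw [setIntegral_const, measureReal_def, meas_bal hμ hcn K, ENNReal.toReal_ofReal (by positivity),
    smul_eq_mul]

lemma CellC.integrableOn_bal (hμ : μ (Metric.closedBall (0:ℚ_[p]) 1) = 1) {K : ℕ}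
    {f : ℚ_[p] → ℝ} (hf : CellC p m K f) {c : ℚ_[p]} (hc : c ∈ Efund p m) :
    IntegrableOn f (bal p K c) μ := by
  obtain ⟨s, hs, hcn⟩ := Efund_exists_s hc
  rw [integrableOn_congr_fun (fun z hz => hf c hc z hz) (measurableSet_bal c)]
  refine (integrableOn_const_iff).mpr (Or.inr ?_)
  rw [meas_bal hμ hcn K]
  exact ENNReal.ofReal_lt_top

lemma CellC.integrableOn_Efund (hm : 1 ≤ m) {K : ℕ} (hK : 1 ≤ K)
    (hμ : μ (Metric.closedBall (0:ℚ_[p]) 1) = 1)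
    {f : ℚ_[p] → ℝ} (hf : CellC p m K f) : IntegrableOn f (Efund p m) μ := by
  rw [Efund_eq_biUnion hm hK (p := p) (m := m) (K := K)]
  rw [integrableOn_finset_iUnion]
  intro B hB
  obtain ⟨c, ⟨_, hcE⟩, rfl⟩ := cells_shape hB
  exact hf.integrableOn_bal hμ hcE

lemma CellC.integral_Efund (hm : 1 ≤ m) {K : ℕ} (hK : 1 ≤ K)
    (hμ : μ (Metric.closedBall (0:ℚ_[p]) 1) = 1)
    {f : ℚ_[p] → ℝ} (hf : CellC p m K f) :
    ∫ z in Efund p m, f z ∂μ = ∑ B ∈ cells p m K, ∫ z in B, f z ∂μ := by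
  rw [Efund_eq_biUnion hm hK (p := p) (m := m) (K := K)]
  refine integral_biUnion_finset _ ?_ (cells_pairwise_disjoint hK) ?_
  · intro B hB
    obtain ⟨c, _, rfl⟩ := cells_shape hB
    exact measurableSet_bal c
  · intro B hB
    obtain ⟨c, ⟨_, hcE⟩, rfl⟩ := cells_shape hB
    exact hf.integrableOn_bal hμ hcE

end Integration

/-! ### conductor lemmas -/

lemma cond_eq_of_mem_bal {f : ℚ_[p] → ℝ} (hf : HasConductor p m k f)
    {c : ℚ_[p]} (hc : c ∈ Efund p m) {z : ℚ_[p]} (hz : z ∈ bal p k c) : f z = f c := by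
  have hc0 := Efund_ne_zero hc
  have hcpos : 0 < ‖c‖ := Efund_norm_pos hc
  have hzc : z = c * (z / c) := by field_simp
  rw [show f z = f (c * (z / c)) by rw [← hzc]]
  apply hf c hc
  have hdiv : z / c - 1 = (z - c) / c := by field_simp
  rw [hdiv, norm_div, div_le_iff₀ hcpos]
  exact mem_bal.mp hz

lemma cond_comp_sig (hm : 1 ≤ m) (hk : 1 ≤ k) {φ : ℚ_[p] → ℝ}
    (hφ : HasConductor p m k φ) :
    HasConductor p m k (fun z => φ (sig p m z)) := by
  intro x hx u hu
  have hu1 : ‖u‖ = 1 := by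
    have h1 : ‖(1:ℚ_[p]) - u‖ < ‖(1:ℚ_[p])‖ := by
      rw [norm_one, norm_sub_rev]
      exact lt_of_le_of_lt hu (ppow_lt_one (by omega))
    have := norm_eq_of_close h1
    simpa using this
  have hu0 : u ≠ 0 := by
    intro h; rw [h, norm_zero] at hu1; norm_num at hu1
  have hsig : sig p m (x * u) = sig p m x * u⁻¹ := by
    unfold sig; rw [mul_inv]; ring
  simp only [hsig]
  apply hφ (sig p m x) (sig_mem_Efund hm hx) u⁻¹
  have hinv : u⁻¹ - 1 = (1 - u) / u := by field_simp
  rw [hinv, norm_div, hu1, div_one, norm_sub_rev]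
  exact hu

lemma cond_sub {f g : ℚ_[p] → ℝ} (hf : HasConductor p m k f)
    (hg : HasConductor p m k g) : HasConductor p m k (fun z => f z - g z) := by
  intro x hx u hu
  simp only [hf x hx u hu, hg x hx u hu]

lemma integrand_cellC (hk : 1 ≤ k) {F : ℚ_[p] → ℝ} (hF : HasConductor p m k F)
    {x : ℚ_[p]} (hx : x ∈ Efund p m) :
    CellC p m k (fun z => (F z - F x) / ‖z - x‖^2) := by
  intro c hc z hz
  by_cases hxc : x ∈ bal p k c
  · have h1 : F x = F c := cond_eq_of_mem_bal hF hc hxc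
    have h2 : F z = F c := cond_eq_of_mem_bal hF hc hz
    simp only [h1, h2, sub_self, zero_div]
  · have h2 : F z = F c := cond_eq_of_mem_bal hF hc hz
    have hlt : ‖z - c‖ < ‖c - x‖ := by
      have h3 : ¬ (‖x - c‖ ≤ (p:ℝ)^(-(k:ℤ)) * ‖c‖) := fun h => hxc (mem_bal.mpr h)
      push_neg at h3
      rw [norm_sub_rev] at h3
      exact lt_of_le_of_lt (mem_bal.mp hz) h3
    have hnorm : ‖z - x‖ = ‖c - x‖ := by
      have hne : ‖z - c‖ ≠ ‖c - x‖ := ne_of_lt hlt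
      have hmax := Padic.add_eq_max_of_ne (q := z - c) (r := c - x)
        (by rw [norm_sub_rev (c) (x)] at hne ⊢ <;> exact hne)
      rw [show (z - c) + (c - x) = z - x by ring] at hmax
      rw [hmax, max_eq_right hlt.le]
    simp only [h2, hnorm]

/-! ### the operator D on conductor-k functions -/

section Dops

variable [MeasurableSpace ℚ_[p]] [BorelSpace ℚ_[p]] {μ : Measure ℚ_[p]}
  [μ.IsAddHaarMeasure]

lemma Dop_sub (hm : 1 ≤ m) (hk : 1 ≤ k) (hμ : μ (Metric.closedBall (0:ℚ_[p]) 1) = 1)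
    {f g : ℚ_[p] → ℝ} (hf : HasConductor p m k f) (hg : HasConductor p m k g)
    {x : ℚ_[p]} (hx : x ∈ Efund p m) :
    Dop p m μ (fun z => f z - g z) x = Dop p m μ f x - Dop p m μ g x := by
  unfold Dop
  rw [← mul_sub]
  congr 1
  have hstep : ∫ z in Efund p m, ((fun z => f z - g z) z - (fun z => f z - g z) x) / ‖z - x‖ ^ 2 ∂μ
      = ∫ z in Efund p m, ((f z - f x) / ‖z - x‖ ^ 2 - (g z - g x) / ‖z - x‖ ^ 2) ∂μ := by
    apply integral_congr_ae
    filter_upwards with z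
    rw [sub_sub_sub_comm, sub_div]
  rw [hstep]
  exact integral_sub
    ((integrand_cellC hk hf hx).integrableOn_Efund hm hk hμ)
    ((integrand_cellC hk hg hx).integrableOn_Efund hm hk hμ)

lemma Dop_comp_sig (hm : 1 ≤ m) (hk : 1 ≤ k)
    (hμ : μ (Metric.closedBall (0:ℚ_[p]) 1) = 1)
    {φ : ℚ_[p] → ℝ} (hφ : HasConductor p m k φ) {x : ℚ_[p]} (hx : x ∈ Efund p m) :
    Dop p m μ (fun z => φ (sig p m z)) x = Dop p m μ φ (sig p m x) := by
  have hx0 : x ≠ 0 := Efund_ne_zero hx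
  have hx' : sig p m x ∈ Efund p m := sig_mem_Efund hm hx
  have hΦ : HasConductor p m k (fun z => φ (sig p m z)) := cond_comp_sig hm hk hφ
  have hgC : CellC p m k (fun z => (φ (sig p m z) - φ (sig p m x)) / ‖z - x‖ ^ 2) :=
    integrand_cellC hk hΦ hx
  have hhC : CellC p m k (fun w => (φ w - φ (sig p m x)) / ‖w - sig p m x‖ ^ 2) :=
    integrand_cellC hk hφ hx'
  have hL : Dop p m μ (fun z => φ (sig p m z)) x
      = ‖x‖ * ∑ B ∈ cells p m k, ∫ z in B, (φ (sig p m z) - φ (sig p m x)) / ‖z - x‖ ^ 2 ∂μ := by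
    unfold Dop
    rw [hgC.integral_Efund hm hk hμ]
  have hR : Dop p m μ φ (sig p m x)
      = ‖sig p m x‖ * ∑ B ∈ cells p m k, ∫ w in B, (φ w - φ (sig p m x)) / ‖w - sig p m x‖ ^ 2 ∂μ := by
    unfold Dop
    rw [hhC.integral_Efund hm hk hμ]
  rw [hL, hR, Finset.mul_sum, Finset.mul_sum]
  have himg : ∀ B ∈ cells p m k, sig p m '' B ∈ cells p m k := by
    intro B hB
    obtain ⟨c, ⟨_, hcE⟩, rfl⟩ := cells_shape hB
    rw [sig_image_bal hm hk (Efund_ne_zero hcE)]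
    exact bal_mem_cells hm hk (sig_mem_Efund hm hcE)
  have hinv : ∀ B ∈ cells p m k, sig p m '' (sig p m '' B) = B := by
    intro B hB
    obtain ⟨c, ⟨_, hcE⟩, rfl⟩ := cells_shape hB
    rw [sig_image_bal hm hk (Efund_ne_zero hcE),
        sig_image_bal hm hk (sig_ne_zero (Efund_ne_zero hcE)),
        sig_sig (Efund_ne_zero hcE)]
  have reidx : ∑ B ∈ cells p m k,
        ‖x‖ * ∫ z in B, (φ (sig p m z) - φ (sig p m x)) / ‖z - x‖ ^ 2 ∂μ
      = ∑ B ∈ cells p m k,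
        ‖x‖ * ∫ z in sig p m '' B, (φ (sig p m z) - φ (sig p m x)) / ‖z - x‖ ^ 2 ∂μ := by
    refine (Finset.sum_nbij' (i := fun B => sig p m '' B) (j := fun B => sig p m '' B)
      himg himg hinv hinv ?_).symm
    intro B hB
    rfl
  rw [reidx]
  apply Finset.sum_congr rfl
  intro B hB
  obtain ⟨c, ⟨_, hcE⟩, rfl⟩ := cells_shape hB
  have hc0 : c ≠ 0 := Efund_ne_zero hcE
  have hscE : sig p m c ∈ Efund p m := sig_mem_Efund hm hcE
  rw [sig_image_bal hm hk hc0]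
  rw [hgC.integral_bal hμ hscE, hhC.integral_bal hμ hcE]
  rw [sig_sig hc0]
  -- now pure algebra
  by_cases hceq : c = sig p m x
  · subst hceq
    simp
  · have hd0 : c - sig p m x ≠ 0 := sub_ne_zero.mpr hceq
    have hdpos : 0 < ‖c - sig p m x‖ := norm_pos_iff.mpr hd0
    have hsx0 : sig p m x ≠ 0 := sig_ne_zero hx0
    have hden : ‖sig p m c - x‖
        = (p:ℝ)^(1-(m:ℤ)) * ‖c - sig p m x‖ / (‖c‖ * ‖sig p m x‖) := by
      conv_lhs => rw [show (x:ℚ_[p]) = sig p m (sig p m x) from (sig_sig hx0).symm]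
      exact norm_sig_sub_sig hm hc0 hsx0
    have hnsc : ‖sig p m c‖ = (p:ℝ)^(1-(m:ℤ)) / ‖c‖ := norm_sig hm hc0
    have hnx : ‖x‖ = (p:ℝ)^(1-(m:ℤ)) / ‖sig p m x‖ := by
      rw [norm_sig hm hx0]
      have h1 : 0 < ‖x‖ := norm_pos_iff.mpr hx0
      have h2 : (0:ℝ) < (p:ℝ)^(1-(m:ℤ)) := ppow_pos _
      field_simp
    rw [hden, hnsc, hnx]
    have ha : 0 < ‖c‖ := norm_pos_iff.mpr hc0
    have hb : 0 < ‖sig p m x‖ := norm_pos_iff.mpr hsx0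
    have hP : (0:ℝ) < (p:ℝ)^(1-(m:ℤ)) := ppow_pos _
    have hr : (0:ℝ) < (p:ℝ)^(-(k:ℤ)) := ppow_pos _
    set A := φ c - φ (sig p m x)
    set a := ‖c‖
    set b := ‖sig p m x‖
    set P := (p:ℝ)^(1-(m:ℤ))
    set r := (p:ℝ)^(-(k:ℤ))
    set d := ‖c - sig p m x‖
    field_simp

end Dops

/-! ### functions with vanishing D are constant -/

section Kernel

variable [MeasurableSpace ℚ_[p]] [BorelSpace ℚ_[p]] {μ : Measure ℚ_[p]}
  [μ.IsAddHaarMeasure]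

lemma reps_nonempty (hm : 1 ≤ m) {K : ℕ} : (reps p m K).Nonempty := by
  have h1 : ¬ p ∣ 1 := fun h => hp.out.ne_one (Nat.dvd_one.mp h)
  have h0 : ((0,0) : ℕ × ℕ) ∈
      ((Finset.range m) ×ˢ ((Finset.range (p^K)).filter fun j => ¬ p ∣ (j+1))) := by
    simp only [Finset.mem_product, Finset.mem_range, Finset.mem_filter]
    exact ⟨by omega, pow_pos hp.out.pos K, by simpa using h1⟩
  exact ⟨_, Finset.mem_image_of_mem _ h0⟩

lemma kernel_const (hm : 1 ≤ m) (hk : 1 ≤ k)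
    (hμ : μ (Metric.closedBall (0:ℚ_[p]) 1) = 1)
    {F : ℚ_[p] → ℝ} (hF : HasConductor p m k F)
    (hD : ∀ x ∈ Efund p m, Dop p m μ F x = 0) :
    ∀ a ∈ Efund p m, ∀ b ∈ Efund p m, F a = F b := by
  obtain ⟨c0, hc0r, hmax⟩ := Finset.exists_max_image (reps p m k) F (reps_nonempty hm)
  have hc0E : c0 ∈ Efund p m := mem_Efund_of_mem_reps hc0r
  have hbound : ∀ z ∈ Efund p m, F z ≤ F c0 := by
    intro z hz
    obtain ⟨c, hcr, hzc, _⟩ := exists_rep hm hk hz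
    rw [cond_eq_of_mem_bal hF (mem_Efund_of_mem_reps hcr) hzc]
    exact hmax c hcr
  have hcell : ∀ c ∈ reps p m k, F c = F c0 := by
    have hD0 := hD c0 hc0E
    unfold Dop at hD0
    rw [(integrand_cellC hk hF hc0E).integral_Efund hm hk hμ] at hD0
    have hxne : ‖c0‖ ≠ 0 := ne_of_gt (Efund_norm_pos hc0E)
    have hsum0 : ∑ B ∈ cells p m k, ∫ z in B, (F z - F c0) / ‖z - c0‖ ^ 2 ∂μ = 0 := by
      rcases mul_eq_zero.mp hD0 with h | h
      · exact absurd h hxne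
      · exact h
    have hterm : ∀ B ∈ cells p m k, ∫ z in B, (F z - F c0) / ‖z - c0‖ ^ 2 ∂μ ≤ 0 := by
      intro B hB
      obtain ⟨c, ⟨_, hcE⟩, rfl⟩ := cells_shape hB
      rw [(integrand_cellC hk hF hc0E).integral_bal hμ hcE]
      have hnum : (F c - F c0) / ‖c - c0‖ ^ 2 ≤ 0 :=
        div_nonpos_of_nonpos_of_nonneg (sub_nonpos.mpr (hbound c hcE)) (sq_nonneg _)
      have hpos : (0:ℝ) ≤ (p:ℝ)^(-(k:ℤ)) * ‖c‖ := by positivity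
      nlinarith
    have hzero := (Finset.sum_eq_zero_iff_of_nonpos hterm).mp hsum0
    intro c hcr
    have hcE := mem_Efund_of_mem_reps hcr
    have hBz := hzero (bal p k c) (Finset.mem_image_of_mem _ hcr)
    rw [(integrand_cellC hk hF hc0E).integral_bal hμ hcE] at hBz
    have hrpos : (0:ℝ) < (p:ℝ)^(-(k:ℤ)) * ‖c‖ :=
      mul_pos (ppow_pos _) (Efund_norm_pos hcE)
    have hval : (F c - F c0) / ‖c - c0‖ ^ 2 = 0 := by
      rcases mul_eq_zero.mp hBz with h | h
      · exact absurd h (ne_of_gt hrpos)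
      · exact h
    rcases div_eq_zero_iff.mp hval with h | h
    · linarith [sub_eq_zero.mp h]
    · have h1 : ‖c - c0‖ = 0 := by
        have := sq_eq_zero_iff.mp h
        exact this
      have h2 : c = c0 := sub_eq_zero.mp (norm_eq_zero.mp h1)
      rw [h2]
  intro a ha b hb
  obtain ⟨ca, hcar, haca, _⟩ := exists_rep hm hk ha
  obtain ⟨cb, hcbr, hbcb, _⟩ := exists_rep hm hk hb
  rw [cond_eq_of_mem_bal hF (mem_Efund_of_mem_reps hcar) haca,
      cond_eq_of_mem_bal hF (mem_Efund_of_mem_reps hcbr) hbcb,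
      hcell ca hcar, hcell cb hcbr]

end Kernel

/-! ### the indicator condition is inversion invariant -/

lemma swap_div (hk : 1 ≤ k) {a b : ℚ_[p]} (ha : a ≠ 0) (hb : b ≠ 0)
    (h : ‖a / b - 1‖ ≤ (p:ℝ)^(-(k:ℤ))) : ‖b / a - 1‖ ≤ (p:ℝ)^(-(k:ℤ)) := by
  have h1 : ‖(1:ℚ_[p]) - a/b‖ < ‖(1:ℚ_[p])‖ := by
    rw [norm_one, norm_sub_rev]
    exact lt_of_le_of_lt h (ppow_lt_one (by omega))
  have h2 : ‖a/b‖ = 1 := by simpa using norm_eq_of_close h1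
  have hab : ‖a‖ = ‖b‖ := by
    rw [norm_div] at h2
    have hbn : ‖b‖ ≠ 0 := ne_of_gt (norm_pos_iff.mpr hb)
    field_simp at h2
    exact h2
  have h4 : ‖b/a‖ = 1 := by
    rw [norm_div, ← hab, div_self (ne_of_gt (norm_pos_iff.mpr ha))]
  have h3 : b/a - 1 = -((a/b - 1) * (b/a)) := by
    field_simp
    ring
  rw [h3, norm_neg, norm_mul, h4, mul_one]
  exact h

lemma indicator_iff (hm : 1 ≤ m) (hk : 1 ≤ k) {x y : ℚ_[p]} (hx : x ≠ 0) (hy : y ≠ 0) :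
    (‖sig p m x / sig p m y - 1‖ ≤ (p:ℝ)^(-(k:ℤ)) ↔ ‖x / y - 1‖ ≤ (p:ℝ)^(-(k:ℤ))) := by
  have hP : (p:ℚ_[p])^(m-1) ≠ 0 := pow_ne_zero _ pQ_ne_zero
  have hquot : sig p m x / sig p m y = y / x := by
    unfold sig
    field_simp
  rw [hquot]
  exact ⟨fun h => swap_div hk hy hx h, fun h => swap_div hk hx hy h⟩

end GreenAux

open GreenAux

/-- Symmetric Green's functions on finite quotients have the inversion
symmetry: if `k ≥ 1` and `G` is a symmetric Green's function on `E_k`, then for all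
`x, y ∈ E` one has `p^{m−1} x⁻¹ ∈ E`, `p^{m−1} y⁻¹ ∈ E`, and
`G(p^{m−1} x⁻¹, p^{m−1} y⁻¹) = G(x, y)`. -/
theorem green_inversion_symmetry (p m : ℕ) [Fact p.Prime] (hm : 1 ≤ m)
    [MeasurableSpace ℚ_[p]] [BorelSpace ℚ_[p]]
    (μ : Measure ℚ_[p]) [μ.IsAddHaarMeasure]
    (hμ : μ (Metric.closedBall 0 1) = 1)
    (k : ℕ) (hk : 1 ≤ k) (G : ℚ_[p] → ℚ_[p] → ℝ)
    (hG : IsGreen p m μ k G) (hGs : IsSymmG p m G) :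
    ∀ x ∈ Efund p m, ∀ y ∈ Efund p m,
      (p : ℚ_[p]) ^ (m - 1) * x⁻¹ ∈ Efund p m ∧
      (p : ℚ_[p]) ^ (m - 1) * y⁻¹ ∈ Efund p m ∧
      G ((p : ℚ_[p]) ^ (m - 1) * x⁻¹) ((p : ℚ_[p]) ^ (m - 1) * y⁻¹) = G x y := by
  intro x hx y hy
  obtain ⟨hG1, hG2, hG3⟩ := hG
  refine ⟨sig_mem_Efund hm hx, sig_mem_Efund hm hy, ?_⟩
  have key : ∀ y' ∈ Efund p m, ∀ a ∈ Efund p m, ∀ b ∈ Efund p m,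
      G (sig p m a) (sig p m y') - G a y' = G (sig p m b) (sig p m y') - G b y' := by
    intro y' hy' a ha b hb
    have hy'' : sig p m y' ∈ Efund p m := sig_mem_Efund hm hy'
    have hcond1 : HasConductor p m k (fun z => G (sig p m z) (sig p m y')) :=
      cond_comp_sig hm hk (hG1 _ hy'')
    have hcond2 : HasConductor p m k (fun z => G z y') := hG1 _ hy'
    have hDzero : ∀ x' ∈ Efund p m,
        Dop p m μ (fun z => G (sig p m z) (sig p m y') - G z y') x' = 0 := by
      intro x' hx'
      rw [Dop_sub hm hk hμ hcond1 hcond2 hx']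
      have hDcs : Dop p m μ (fun z => G (sig p m z) (sig p m y')) x'
          = Dop p m μ (fun w => G w (sig p m y')) (sig p m x') :=
        Dop_comp_sig hm hk hμ (hG1 _ hy'') hx'
      rw [hDcs]
      rw [hG3 _ (sig_mem_Efund hm hx') _ hy'']
      rw [hG3 _ hx' _ hy']
      have hiff := indicator_iff (k := k) hm hk (Efund_ne_zero hx') (Efund_ne_zero hy')
      rw [if_congr hiff rfl rfl]
      ring
    exact kernel_const hm hk hμ (cond_sub hcond1 hcond2) hDzero a ha b hb
  have hconst : ∀ a ∈ Efund p m, ∀ b ∈ Efund p m,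
      G (sig p m a) (sig p m b) - G a b = G (sig p m x) (sig p m y) - G x y := by
    intro a ha b hb
    have hsab : ∀ u ∈ Efund p m, ∀ v ∈ Efund p m,
        G (sig p m u) (sig p m v) - G u v = G (sig p m v) (sig p m u) - G v u := by
      intro u hu v hv
      rw [hGs u hu v hv,
        hGs (sig p m u) (sig_mem_Efund hm hu) (sig p m v) (sig_mem_Efund hm hv)]
    calc G (sig p m a) (sig p m b) - G a b
        = G (sig p m x) (sig p m b) - G x b := key b hb a ha x hx
      _ = G (sig p m b) (sig p m x) - G b x := hsab x hx b hb
      _ = G (sig p m y) (sig p m x) - G y x := key x hx b hb y hy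
      _ = G (sig p m x) (sig p m y) - G x y := hsab y hy x hx
  have hflip : G (sig p m (sig p m x)) (sig p m (sig p m y)) - G (sig p m x) (sig p m y)
      = G (sig p m x) (sig p m y) - G x y :=
    hconst (sig p m x) (sig_mem_Efund hm hx) (sig p m y) (sig_mem_Efund hm hy)
  rw [sig_sig (Efund_ne_zero hx), sig_sig (Efund_ne_zero hy)] at hflip
  show G (sig p m x) (sig p m y) = G x y
  linarith
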